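/- Fix n ≥ 1 and consider the function p(m) = n / (m + 1 + n − (m+1)/C(m+n, n)) for positive integers m. Then p(m) is strictly decreasing in m, and p(m) → 0 as m → ∞. -/

import Mathlib

open Filter

lemma aux_choose_ge (m n : ℕ) (hn : 1 ≤ n) : m + 1 ≤ (m + n).choose n := by
  induction n with
  | zero => omega
  | succ k ih =>
    rcases Nat.eq_zero_or_pos k with hk | hk
    · subst hk; simp
    · have h1 : m + (k + 1) = (m + k) + 1 := by omega
      rw [h1, Nat.choose_succ_succ]
      have := ih hk
      omega

lemma aux_key (m n : ℕ) : (m + 1 + n).choose n * (m + 1) = (m + n).choose n * (m + n + 1) := by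
  have h1 := Nat.add_one_mul_choose_eq (m + n) m
  have h2 : (m + n + 1).choose (m + 1) = (m + n + 1).choose n := by
    rw [← Nat.choose_symm (by omega : m + 1 ≤ m + n + 1)]
    congr 1; omega
  have h3 : (m + n).choose m = (m + n).choose n := by
    rw [← Nat.choose_symm (by omega : m ≤ m + n)]
    congr 1; omega
  have h4 : m + 1 + n = m + n + 1 := by omega
  rw [h4]
  rw [h3, h2] at h1
  linarith [h1]

/-- The probability `p(m) = n / (m + 1 + n − (m+1)/C(m+n, n))` of having to recompute
the security strategy is strictly decreasing in `m` and tends to `0` as `m → ∞`. -/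
theorem stmt_10 (n : ℕ) (hn : 1 ≤ n)
    (p : ℕ → ℝ)
    (hp : ∀ m, p m = (n : ℝ) / ((m : ℝ) + 1 + n - ((m : ℝ) + 1) / ((m + n).choose n : ℝ))) :
    (∀ m₁ m₂ : ℕ, 1 ≤ m₁ → m₁ < m₂ → p m₂ < p m₁) ∧
      Filter.Tendsto p Filter.atTop (nhds 0) := by
  set D : ℕ → ℝ := fun m => (m : ℝ) + 1 + n - ((m : ℝ) + 1) / ((m + n).choose n : ℝ) with hD
  have hn' : (1 : ℝ) ≤ n := by exact_mod_cast hn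
  have hCpos : ∀ m : ℕ, (0 : ℝ) < ((m + n).choose n : ℝ) := by
    intro m
    exact_mod_cast Nat.choose_pos (by omega)
  have hCge : ∀ m : ℕ, (m : ℝ) + 1 ≤ ((m + n).choose n : ℝ) := by
    intro m
    exact_mod_cast aux_choose_ge m n hn
  have hDge : ∀ m : ℕ, (m : ℝ) + 1 ≤ D m := by
    intro m
    have h1 : ((m : ℝ) + 1) / ((m + n).choose n : ℝ) ≤ 1 :=
      (div_le_one (hCpos m)).2 (hCge m)
    have : (1 : ℝ) ≤ n := hn'
    simp only [hD]
    nlinarith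
  have hDpos : ∀ m : ℕ, 0 < D m := fun m => lt_of_lt_of_le (by positivity) (hDge m)
  have hstep : ∀ m : ℕ, D m < D (m + 1) := by
    intro m
    have key : ((m + 1 + n).choose n : ℝ) * ((m : ℝ) + 1) =
        ((m + n).choose n : ℝ) * ((m : ℝ) + n + 1) := by
      exact_mod_cast aux_key m n
    have hC1 := hCpos m
    have hC2 : (0 : ℝ) < ((m + 1 + n).choose n : ℝ) := by
      exact_mod_cast Nat.choose_pos (by omega : n ≤ m + 1 + n)
    have hf : ((m : ℝ) + 1 + 1) / ((m + 1 + n).choose n : ℝ) ≤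
        ((m : ℝ) + 1) / ((m + n).choose n : ℝ) := by
      rw [div_le_div_iff₀ hC2 hC1]
      nlinarith
    simp only [hD]
    push_cast
    nlinarith
  have hmono : StrictMono D := strictMono_nat_of_lt_succ hstep
  constructor
  · intro m₁ m₂ _ hlt
    rw [hp m₁, hp m₂]
    have := hmono hlt
    apply div_lt_div_of_pos_left _ (hDpos m₁) this
    exact_mod_cast hn
  · have hbound : ∀ m : ℕ, p m ≤ (n : ℝ) / ((m : ℝ) + 1) := by
      intro m
      rw [hp m]
      exact div_le_div_of_nonneg_left (by positivity) (by positivity) (hDge m)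
    have hnonneg : ∀ m : ℕ, 0 ≤ p m := by
      intro m
      rw [hp m]
      exact div_nonneg (by positivity) (hDpos m).le
    apply squeeze_zero hnonneg hbound
    apply Filter.Tendsto.div_atTop tendsto_const_nhds
    exact tendsto_atTop_add_const_right _ _ tendsto_natCast_atTop_atTop
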